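/- In the enlarged model with q_t^G(ω) = P(G = G(ω)|F_t)(ω)/P(G = G(ω)) well-defined and positive for t ≤ T−1, suppose S̃ = (S̃_t) is a process that is a martingale on {0,...,T−1} under some measure P̂ equivalent to P on F_{T−1}, with density process L̂_t = (dP̂/dP)|F_t. Then the process (L̂_t / q_t^G)_{t=0..T−1} is a positive (P, G)-martingale M with the property that (S̃_t M_t)_{t=0..T−1} is a (P, G)-martingale, i.e. L̂/q^G is a deflator for S̃ on the horizon {0,...,T−1}. -/

import Mathlib

open MeasureTheory Set

private lemma exists_bound' {Ω : Type*} [Fintype Ω] (g : Ω → ℝ) : ∃ C, ∀ ω, ‖g ω‖ ≤ C :=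
  ⟨∑ ω, ‖g ω‖, fun ω =>
    Finset.single_le_sum (f := fun ω => ‖g ω‖) (fun _ _ => norm_nonneg _) (Finset.mem_univ ω)⟩

private lemma integrable_of_sm' {Ω : Type*} [Fintype Ω] {mΩ : MeasurableSpace Ω}
    {μ : Measure Ω} [IsFiniteMeasure μ] {g : Ω → ℝ} (hg : StronglyMeasurable g) :
    Integrable g μ := by
  obtain ⟨C, hC⟩ := exists_bound' g
  exact ⟨hg.aestronglyMeasurable, HasFiniteIntegral.of_bounded (ae_of_all _ hC)⟩

/-- If `L` is the density of `Phat` w.r.t. `μ` on the sub-σ-algebra `m`, then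
`∫ f * L dμ = ∫ f dPhat` for every `m`-measurable `f`. -/
private lemma density_mul' {Ω : Type*} [Fintype Ω] {m : MeasurableSpace Ω}
    {mΩ : MeasurableSpace Ω} (hm : m ≤ mΩ)
    {μ Phat : Measure Ω} [IsFiniteMeasure μ] [IsFiniteMeasure Phat] {Lf f : Ω → ℝ}
    (hLm : StronglyMeasurable[m] Lf)
    (hLd : ∀ A, MeasurableSet[m] A → ∫ ω in A, Lf ω ∂μ = (Phat A).toReal)
    (hf : StronglyMeasurable[m] f) :
    ∫ ω, f ω * Lf ω ∂μ = ∫ ω, f ω ∂Phat := by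
  classical
  set s : Finset ℝ := (Set.finite_range f).toFinset with hs
  have hmem : ∀ ω, f ω ∈ s := fun ω => by simp [hs]
  have hpre : ∀ r : ℝ, MeasurableSet[m] (f ⁻¹' {r}) := fun r =>
    hf.measurable (measurableSet_singleton r)
  have h1 : ∀ ω, f ω * Lf ω = ∑ r ∈ s, (f ⁻¹' {r}).indicator (fun ω' => r * Lf ω') ω := by
    intro ω
    rw [Finset.sum_eq_single_of_mem (f ω) (hmem ω)]
    · rw [Set.indicator_of_mem (by simp : ω ∈ f ⁻¹' {f ω})]
    · intro r _ hr
      exact Set.indicator_of_notMem (by simp [Ne.symm hr]) _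
  have h2 : ∀ ω, f ω = ∑ r ∈ s, (f ⁻¹' {r}).indicator (fun _ => r) ω := by
    intro ω
    rw [Finset.sum_eq_single_of_mem (f ω) (hmem ω)]
    · rw [Set.indicator_of_mem (by simp : ω ∈ f ⁻¹' {f ω})]
    · intro r _ hr
      exact Set.indicator_of_notMem (by simp [Ne.symm hr]) _
  calc ∫ ω, f ω * Lf ω ∂μ
      = ∫ ω, ∑ r ∈ s, (f ⁻¹' {r}).indicator (fun ω' => r * Lf ω') ω ∂μ := by
        exact integral_congr_ae (ae_of_all _ h1)
    _ = ∑ r ∈ s, ∫ ω, (f ⁻¹' {r}).indicator (fun ω' => r * Lf ω') ω ∂μ := by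
        refine integral_finset_sum _ fun r _ => integrable_of_sm' ?_
        exact ((stronglyMeasurable_const.mul (hLm.mono hm)).indicator (hm _ (hpre r)))
    _ = ∑ r ∈ s, r * (Phat (f ⁻¹' {r})).toReal := by
        refine Finset.sum_congr rfl fun r _ => ?_
        rw [integral_indicator (μ := μ) (hm _ (hpre r)), integral_const_mul, hLd _ (hpre r)]
    _ = ∑ r ∈ s, ∫ ω, (f ⁻¹' {r}).indicator (fun _ => r) ω ∂Phat := by
        refine Finset.sum_congr rfl fun r _ => ?_
        rw [integral_indicator_const (μ := Phat) r (hm _ (hpre r)), smul_eq_mul, mul_comm]; rfl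
    _ = ∫ ω, ∑ r ∈ s, (f ⁻¹' {r}).indicator (fun _ => r) ω ∂Phat := by
        refine (integral_finset_sum _ fun r _ => integrable_of_sm' ?_).symm
        exact stronglyMeasurable_const.indicator (hm _ (hpre r))
    _ = ∫ ω, f ω ∂Phat := integral_congr_ae (ae_of_all _ fun ω => (h2 ω).symm)

/-- `∫ φ * g dμ = ∫ φ * E[g | m] dμ` for `m`-measurable `φ`. -/
private lemma integral_mul_condexp' {Ω : Type*} [Fintype Ω] {m : MeasurableSpace Ω}
    {mΩ : MeasurableSpace Ω} (hm : m ≤ mΩ)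
    {μ : Measure Ω} [IsFiniteMeasure μ]
    {φ g : Ω → ℝ} (hφ : StronglyMeasurable[m] φ) (hg : StronglyMeasurable[mΩ] g) :
    ∫ ω, φ ω * g ω ∂μ = ∫ ω, φ ω * (μ[g|m]) ω ∂μ := by
  have hint : Integrable (φ * g) μ := integrable_of_sm' ((hφ.mono hm).mul hg)
  have hgint : Integrable g μ := integrable_of_sm' hg
  have h := condExp_mul_of_stronglyMeasurable_left hφ hint hgint
  calc ∫ ω, φ ω * g ω ∂μ = ∫ ω, (φ * g) ω ∂μ := rfl
    _ = ∫ ω, (μ[φ * g|m]) ω ∂μ := (integral_condExp hm).symm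
    _ = ∫ ω, φ ω * (μ[g|m]) ω ∂μ := integral_congr_ae (h.mono fun ω hω => by simpa using hω)

/-- `L̂ / q^G` is a deflator on `{0,...,T-1}`: it is a positive `(P, 𝒢)`-martingale `M`
such that `S̃ · M` is a `(P, 𝒢)`-martingale, whenever `S̃` is an `ℱ`-martingale under
an equivalent measure `P̂` with density process `L̂`. -/
theorem stmt5 {Ω : Type*} [Fintype Ω] {mΩ : MeasurableSpace Ω}
    (μ : Measure Ω) [IsProbabilityMeasure μ]
    (T : ℕ) (hT : 1 ≤ T) (ℱ 𝒢 : Filtration ℕ mΩ)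
    {Γ : Type*} [Fintype Γ] [MeasurableSpace Γ] [MeasurableSingletonClass Γ]
    (G : Ω → Γ) (hG : Measurable G)
    (h𝒢 : ∀ s, (𝒢 s : MeasurableSpace Ω) =
      (ℱ s : MeasurableSpace Ω) ⊔ MeasurableSpace.comap G inferInstance)
    (hposG : ∀ c : Γ, 0 < (μ (G ⁻¹' {c})).toReal)
    (hpos : ∀ c : Γ, ∀ s ≤ T - 1, ∀ᵐ ω ∂μ,
      0 < (μ[(G ⁻¹' {c}).indicator (fun _ => (1 : ℝ)) | ℱ s]) ω)
    (qG : ℕ → Ω → ℝ)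
    (hqG : ∀ s ω, qG s ω =
      (μ[(G ⁻¹' {G ω}).indicator (fun _ => (1 : ℝ)) | ℱ s]) ω / (μ (G ⁻¹' {G ω})).toReal)
    (Phat : Measure Ω) [IsProbabilityMeasure Phat]
    (hequiv : Phat ≪ μ ∧ μ ≪ Phat)
    (L : ℕ → Ω → ℝ)
    (hL : ∀ s, StronglyMeasurable[ℱ s] (L s) ∧
      ∀ A, MeasurableSet[ℱ s] A → ∫ ω in A, L s ω ∂μ = (Phat A).toReal)
    (Stil : ℕ → Ω → ℝ)
    (hSadapted : ∀ s ≤ T - 1, StronglyMeasurable[ℱ s] (Stil s))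
    (hSmart : ∀ s t, s ≤ t → t ≤ T - 1 → Phat[Stil t | ℱ s] =ᵐ[Phat] Stil s) :
    (∀ s ≤ T - 1, ∀ᵐ ω ∂μ, 0 < L s ω / qG s ω) ∧
    (∀ s ≤ T - 1, StronglyMeasurable[𝒢 s] (fun ω => L s ω / qG s ω)) ∧
    (∀ s t, s ≤ t → t ≤ T - 1 →
      μ[(fun ω => L t ω / qG t ω) | 𝒢 s] =ᵐ[μ] fun ω => L s ω / qG s ω) ∧
    (∀ s t, s ≤ t → t ≤ T - 1 →
      μ[(fun ω => Stil t ω * (L t ω / qG t ω)) | 𝒢 s] =ᵐ[μ]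
        fun ω => Stil s ω * (L s ω / qG s ω)) := by
  classical
  have hFle𝒢 : ∀ u, (ℱ u : MeasurableSpace Ω) ≤ 𝒢 u := fun u => (h𝒢 u) ▸ le_sup_left
  have hGmem : ∀ u (c : Γ), MeasurableSet[𝒢 u] (G ⁻¹' {c}) := by
    intro u c
    have h : MeasurableSet[MeasurableSpace.comap G inferInstance] (G ⁻¹' {c}) :=
      ⟨{c}, measurableSet_singleton c, rfl⟩
    exact ((h𝒢 u) ▸ (le_sup_right :
      MeasurableSpace.comap G inferInstance ≤ (ℱ u : MeasurableSpace Ω) ⊔ _)) _ h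
  -- positivity of L
  have hLpos : ∀ u, ∀ᵐ ω ∂μ, 0 < L u ω := by
    intro u
    set A : Set Ω := {ω | L u ω ≤ 0} with hAdef
    have hA : MeasurableSet[ℱ u] A := by
      have : A = L u ⁻¹' Set.Iic 0 := rfl
      rw [this]
      exact (hL u).1.measurable measurableSet_Iic
    have h1 : ∫ ω in A, L u ω ∂μ ≤ 0 :=
      setIntegral_nonpos (ℱ.le u A hA) fun ω hω => hω
    rw [(hL u).2 A hA] at h1
    have h2 : Phat A = 0 := by
      have := ENNReal.toReal_nonneg (a := Phat A)
      have h3 : (Phat A).toReal = 0 := le_antisymm h1 this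
      exact (ENNReal.toReal_eq_zero_iff _).mp h3 |>.resolve_right (measure_ne_top _ _)
    have hμA : μ A = 0 := hequiv.2 h2
    have : ∀ᵐ ω ∂μ, ω ∉ A := by
      rw [ae_iff]
      simpa using hμA
    filter_upwards [this] with ω hω
    simpa [hAdef, not_le] using hω
  -- positivity of qG
  have hqpos : ∀ u, u ≤ T - 1 → ∀ᵐ ω ∂μ, 0 < qG u ω := by
    intro u hu
    have h := (ae_all_iff (μ := μ)).2 fun c : Γ => hpos c u hu
    filter_upwards [h] with ω hω
    rw [hqG]
    exact div_pos (hω (G ω)) (hposG _)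
  -- measurability of qG
  have hqGsm : ∀ u, StronglyMeasurable[𝒢 u] (qG u) := by
    intro u
    have hrep : qG u = fun ω => ∑ c : Γ, (G ⁻¹' {c}).indicator
        (fun ω' => (μ[(G ⁻¹' {c}).indicator (fun _ => (1 : ℝ)) | ℱ u]) ω'
          / (μ (G ⁻¹' {c})).toReal) ω := by
      funext ω
      rw [Finset.sum_eq_single_of_mem (G ω) (Finset.mem_univ _)]
      · rw [Set.indicator_of_mem (by simp : ω ∈ G ⁻¹' {G ω})]
        exact hqG u ω
      · intro c _ hc
        exact Set.indicator_of_notMem (by simp [Ne.symm hc]) _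
    rw [hrep]
    refine Finset.stronglyMeasurable_fun_sum _ fun c _ => StronglyMeasurable.indicator ?_ (hGmem u c)
    exact ((stronglyMeasurable_condExp.mono (hFle𝒢 u)).measurable.div measurable_const).stronglyMeasurable
  have hMsm : ∀ u, StronglyMeasurable[𝒢 u] (fun ω => L u ω / qG u ω) := fun u =>
    (((hL u).1.mono (hFle𝒢 u)).measurable.div (hqGsm u).measurable).stronglyMeasurable
  -- key integral identity
  have key : ∀ t, t ≤ T - 1 → ∀ c : Γ, ∀ f : Ω → ℝ, StronglyMeasurable[ℱ t] f →
      ∀ A : Set Ω, MeasurableSet[ℱ t] A →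
      ∫ ω in A ∩ G ⁻¹' {c}, f ω / qG t ω ∂μ
        = (μ (G ⁻¹' {c})).toReal * ∫ ω in A, f ω ∂μ := by
    intro t ht c f hf A hA
    set E : Ω → ℝ := μ[(G ⁻¹' {c}).indicator (fun _ => (1 : ℝ)) | ℱ t] with hE
    set μc : ℝ := (μ (G ⁻¹' {c})).toReal with hμc
    set φ : Ω → ℝ := A.indicator (fun ω' => f ω' * μc / E ω') with hφdef
    have hAm : MeasurableSet (A ∩ G ⁻¹' {c}) :=
      (ℱ.le t A hA).inter (hG (measurableSet_singleton c))
    have hφ : StronglyMeasurable[ℱ t] φ :=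
      (((hf.mul stronglyMeasurable_const).measurable.div
        stronglyMeasurable_condExp.measurable).stronglyMeasurable).indicator hA
    have step1 : ∫ ω in A ∩ G ⁻¹' {c}, f ω / qG t ω ∂μ
        = ∫ ω, φ ω * (G ⁻¹' {c}).indicator (fun _ => (1 : ℝ)) ω ∂μ := by
      rw [← integral_indicator hAm]
      refine integral_congr_ae (ae_of_all _ fun ω => ?_)
      simp only [hφdef, Set.indicator_apply, Set.mem_inter_iff, Set.mem_preimage,
        Set.mem_singleton_iff]
      by_cases h1 : ω ∈ A <;> by_cases h2 : G ω = c <;> simp [h1, h2]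
      rw [hqG, h2, div_div_eq_mul_div, hE, hμc]
    have step2 : ∫ ω, φ ω * (G ⁻¹' {c}).indicator (fun _ => (1 : ℝ)) ω ∂μ
        = ∫ ω, φ ω * E ω ∂μ :=
      integral_mul_condexp' (ℱ.le t) hφ
        (stronglyMeasurable_const.indicator (hG (measurableSet_singleton c)))
    have step3 : ∫ ω, φ ω * E ω ∂μ = ∫ ω, A.indicator (fun ω' => f ω' * μc) ω ∂μ := by
      refine integral_congr_ae ?_
      filter_upwards [hpos c t ht] with ω hω
      simp only [hφdef, Set.indicator_apply]
      by_cases h1 : ω ∈ A <;> simp [h1]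
      rw [div_mul_cancel₀ _ (ne_of_gt (hE ▸ hω))]
    rw [step1, step2, step3, integral_indicator (ℱ.le t A hA), integral_mul_const, mul_comm]
  -- the generic conditional expectation identification on 𝒢 s
  have main : ∀ s, ∀ gt gs : Ω → ℝ, Integrable gt μ → Integrable gs μ →
      StronglyMeasurable[𝒢 s] gs →
      (∀ A : Set Ω, MeasurableSet[ℱ s] A → ∀ c : Γ,
        ∫ ω in A ∩ G ⁻¹' {c}, gt ω ∂μ = ∫ ω in A ∩ G ⁻¹' {c}, gs ω ∂μ) →
      μ[gt | 𝒢 s] =ᵐ[μ] gs := by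
    intro s gt gs hgt hgs hgsm hAB
    set K : Set (Set Ω) := {S | ∃ A, MeasurableSet[ℱ s] A ∧ ∃ B : Set Γ, S = A ∩ G ⁻¹' B}
      with hK
    have h_eq : (𝒢 s : MeasurableSpace Ω) = MeasurableSpace.generateFrom K := by
      refine le_antisymm ?_ ?_
      · rw [h𝒢 s]
        refine sup_le ?_ ?_
        · intro A hA
          exact MeasurableSpace.measurableSet_generateFrom ⟨A, hA, Set.univ, by simp⟩
        · intro S hS
          obtain ⟨B, -, rfl⟩ := hS
          exact MeasurableSpace.measurableSet_generateFrom ⟨Set.univ, MeasurableSet.univ, B,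
            by simp⟩
      · refine MeasurableSpace.generateFrom_le fun S hS => ?_
        obtain ⟨A, hA, B, rfl⟩ := hS
        refine MeasurableSet.inter (hFle𝒢 s _ hA) ?_
        have h : MeasurableSet[MeasurableSpace.comap G inferInstance] (G ⁻¹' B) :=
          ⟨B, B.toFinite.measurableSet, rfl⟩
        exact ((h𝒢 s) ▸ (le_sup_right :
          MeasurableSpace.comap G inferInstance ≤ (ℱ s : MeasurableSpace Ω) ⊔ _)) _ h
    have h_pi : IsPiSystem K := by
      rintro S1 ⟨A1, hA1, B1, rfl⟩ S2 ⟨A2, hA2, B2, rfl⟩ -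
      refine ⟨A1 ∩ A2, hA1.inter hA2, B1 ∩ B2, ?_⟩
      ext ω
      simp only [Set.mem_inter_iff, Set.mem_preimage]
      tauto
    -- the property holds on all elements of K
    have hbasic : ∀ S ∈ K, ∫ ω in S, gt ω ∂μ = ∫ ω in S, gs ω ∂μ := by
      rintro S ⟨A, hA, B, rfl⟩
      have hdec : A ∩ G ⁻¹' B = ⋃ c ∈ B.toFinite.toFinset, A ∩ G ⁻¹' {c} := by
        ext ω
        simp only [Set.mem_inter_iff, Set.mem_preimage, Set.mem_iUnion, Set.Finite.mem_toFinset,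
          Set.mem_singleton_iff]
        constructor
        · rintro ⟨h1, h2⟩; exact ⟨G ω, h2, h1, rfl⟩
        · rintro ⟨c, hc, h1, h2⟩; exact ⟨h1, h2 ▸ hc⟩
      have hms : ∀ c ∈ B.toFinite.toFinset, MeasurableSet (A ∩ G ⁻¹' {c}) := fun c _ =>
        (ℱ.le s A hA).inter (hG (measurableSet_singleton c))
      have hdisj : Set.Pairwise (↑B.toFinite.toFinset) (Function.onFun Disjoint fun c => A ∩ G ⁻¹' {c}) := by
        intro c _ c' _ hcc'
        simp only [Function.onFun, Set.disjoint_left]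
        rintro ω ⟨-, h1⟩ ⟨-, h2⟩
        exact hcc' ((Set.mem_singleton_iff.mp h1).symm.trans (Set.mem_singleton_iff.mp h2))
      rw [hdec, integral_biUnion_finset _ hms hdisj (fun c _ => hgt.integrableOn),
        integral_biUnion_finset _ hms hdisj (fun c _ => hgs.integrableOn)]
      exact Finset.sum_congr rfl fun c _ => hAB A hA c
    have htot : ∫ ω, gt ω ∂μ = ∫ ω, gs ω ∂μ := by
      have h := hbasic Set.univ ⟨Set.univ, MeasurableSet.univ, Set.univ, by simp⟩
      simpa using h
    have hall : ∀ S : Set Ω, MeasurableSet[𝒢 s] S → ∫ ω in S, gt ω ∂μ = ∫ ω in S, gs ω ∂μ := by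
      intro S hS
      refine MeasurableSpace.induction_on_inter (m := (𝒢 s : MeasurableSpace Ω))
        (C := fun S _ => ∫ ω in S, gt ω ∂μ = ∫ ω in S, gs ω ∂μ) h_eq h_pi ?_ ?_ ?_ ?_ S hS
      · simp
      · exact hbasic
      · intro S' hS' hC
        have hS'm : MeasurableSet S' := 𝒢.le s _ hS'
        have h1 := integral_add_compl hS'm hgt
        have h2 := integral_add_compl hS'm hgs
        linarith
      · intro f hdisj hm hC
        rw [integral_iUnion (fun i => 𝒢.le s _ (hm i)) hdisj hgt.integrableOn,
          integral_iUnion (fun i => 𝒢.le s _ (hm i)) hdisj hgs.integrableOn]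
        exact tsum_congr hC
    exact (ae_eq_condExp_of_forall_setIntegral_eq (𝒢.le s) hgt
      (fun S _ _ => hgs.integrableOn)
      (fun S hS _ => (hall S hS).symm) hgsm.aestronglyMeasurable).symm
  -- integrability of the relevant processes
  have hMint : ∀ u, Integrable (fun ω => L u ω / qG u ω) μ := fun u =>
    integrable_of_sm' ((hMsm u).mono (𝒢.le u))
  have hSMint : ∀ u, u ≤ T - 1 → Integrable (fun ω => Stil u ω * (L u ω / qG u ω)) μ :=
    fun u hu => integrable_of_sm'
      (((hSadapted u hu).mono (ℱ.le u)).mul ((hMsm u).mono (𝒢.le u)))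
  refine ⟨?_, fun s hs => hMsm s, ?_, ?_⟩
  · -- positivity
    intro s hs
    filter_upwards [hLpos s, hqpos s hs] with ω h1 h2
    exact div_pos h1 h2
  · -- M is a martingale
    intro s t hst htT
    have hsT : s ≤ T - 1 := le_trans hst htT
    refine main s _ _ (hMint t) (hMint s) (hMsm s) ?_
    intro A hA c
    have h1 := key t htT c (L t) (hL t).1 A (ℱ.mono hst _ hA)
    have h2 := key s hsT c (L s) (hL s).1 A hA
    rw [h1, h2, (hL t).2 A (ℱ.mono hst _ hA), (hL s).2 A hA]
  · -- S̃ · M is a martingale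
    intro s t hst htT
    have hsT : s ≤ T - 1 := le_trans hst htT
    -- auxiliary computation
    have claim4aux : ∀ u, u ≤ T - 1 → ∀ A : Set Ω, MeasurableSet[ℱ u] A → ∀ c : Γ,
        ∫ ω in A ∩ G ⁻¹' {c}, Stil u ω * (L u ω / qG u ω) ∂μ
          = (μ (G ⁻¹' {c})).toReal * ∫ ω, A.indicator (Stil u) ω ∂Phat := by
      intro u hu A hA c
      have h1 : ∫ ω in A ∩ G ⁻¹' {c}, Stil u ω * (L u ω / qG u ω) ∂μ
          = ∫ ω in A ∩ G ⁻¹' {c}, (Stil u ω * L u ω) / qG u ω ∂μ := by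
        simp_rw [mul_div_assoc]
      rw [h1, key u hu c (fun ω => Stil u ω * L u ω) ((hSadapted u hu).mul (hL u).1) A hA]
      congr 1
      have h2 : ∫ ω in A, Stil u ω * L u ω ∂μ
          = ∫ ω, A.indicator (Stil u) ω * L u ω ∂μ := by
        rw [← integral_indicator (ℱ.le u A hA)]
        refine integral_congr_ae (ae_of_all _ fun ω => ?_)
        rw [Set.indicator_mul_left]
      rw [h2]
      exact density_mul' (ℱ.le u) (hL u).1 (hL u).2 ((hSadapted u hu).indicator hA)
    refine main s _ _ (hSMint t htT) (hSMint s hsT)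
      (((hSadapted s hsT).mono (hFle𝒢 s)).mul (hMsm s)) ?_
    intro A hA c
    rw [claim4aux t htT A (ℱ.mono hst _ hA) c, claim4aux s hsT A hA c]
    congr 1
    -- martingale property of S̃ under Phat
    rw [integral_indicator (ℱ.le s A hA), integral_indicator (ℱ.le s A hA)]
    have hint : Integrable (Stil t) Phat :=
      integrable_of_sm' ((hSadapted t htT).mono (ℱ.le t))
    rw [← setIntegral_condExp (ℱ.le s) hint hA]
    refine setIntegral_congr_ae (ℱ.le s A hA) ?_
    exact (hSmart s t hst htT).mono fun ω h _ => h
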